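/- The Jacobson radical J(R) of an algebra R over a field of characteristic zero is stable under every locally nilpotent derivation of R. -/

import Mathlib

open Finset
open scoped Classical

theorem diagSum {M : Type*} [AddCommMonoid M] (a b : ℕ) (t : ℕ → ℕ → M)
    (hv : ∀ i j, a ≤ i ∨ b ≤ j → t i j = 0) :
    ∑ n ∈ range (a + b), ∑ k ∈ range (n + 1), t k (n - k) =
      ∑ i ∈ range a, ∑ j ∈ range b, t i j := by
  rw [← Finset.sum_product']
  rw [show (∑ n ∈ range (a + b), ∑ k ∈ range (n + 1), t k (n - k)) =
      ∑ p ∈ (range (a + b)).sigma (fun n => range (n + 1)), t p.2 (p.1 - p.2) from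
    (Finset.sum_sigma (range (a+b)) (fun n => range (n+1)) (fun p => t p.2 (p.1 - p.2))).symm]
  have h1 : ∑ p ∈ (range (a + b)).sigma (fun n => range (n + 1)), t p.2 (p.1 - p.2)
      = ∑ q ∈ (range (a + b) ×ˢ range (a + b)).filter (fun q => q.1 + q.2 < a + b),
          t q.1 q.2 := by
    apply Finset.sum_nbij' (fun p => (p.2, p.1 - p.2)) (fun q => ⟨q.1 + q.2, q.1⟩)
    · intro p hp
      simp only [mem_sigma, mem_range] at hp
      simp only [mem_filter, mem_product, mem_range]
      omega
    · intro q hq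
      simp only [mem_filter, mem_product, mem_range] at hq
      simp only [mem_sigma, mem_range]
      omega
    · intro p hp
      simp only [mem_sigma, mem_range] at hp
      ext <;> simp <;> omega
    · intro q hq; simp
    · intro p hp; rfl
  rw [h1]
  symm
  apply Finset.sum_subset
  · intro q hq
    simp only [mem_product, mem_range] at hq
    simp only [mem_filter, mem_product, mem_range]
    omega
  · intro q hq hq'
    simp only [mem_filter, mem_product, mem_range] at hq
    simp only [mem_product, mem_range] at hq'
    exact hv q.1 q.2 (by omega)

theorem sum_range_stable {M : Type*} [AddCommMonoid M] (f : ℕ → M) {m m' : ℕ}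
    (h : ∀ n, m ≤ n → f n = 0) (h' : ∀ n, m' ≤ n → f n = 0) :
    ∑ n ∈ range m, f n = ∑ n ∈ range m', f n := by
  rcases le_total m m' with hle | hle
  · exact Finset.sum_subset (Finset.range_subset_range.2 hle)
      (fun n hn hn' => h n (by simp only [mem_range] at *; omega))
  · exact (Finset.sum_subset (Finset.range_subset_range.2 hle)
      (fun n hn hn' => h' n (by simp only [mem_range] at *; omega))).symm

section ExpD

variable {K R : Type*} [Field K] [CharZero K] [Ring R] [Algebra K R]
  {d : R → R}

/-- truncated exponential -/
noncomputable def expD (d : R → R) (hln : ∀ r : R, ∃ n, d^[n] r = 0) (c : K) (r : R) : R :=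
  ∑ n ∈ range (Nat.find (hln r)), ((n.factorial : K)⁻¹ * c ^ n) • d^[n] r

variable (hadd : ∀ x y, d (x + y) = d x + d y)
  (hleib : ∀ x y, d (x * y) = d x * y + x * d y)
  (hln : ∀ r : R, ∃ n, d^[n] r = 0)

include hadd

theorem d_zero : d (0 : R) = 0 := by
  have := hadd 0 0
  simp only [add_zero] at this
  have h2 := congrArg (fun z => z - d 0) this
  simpa using h2.symm

theorem iter_d_zero (n : ℕ) : d^[n] (0 : R) = 0 := by
  induction n with
  | zero => rfl
  | succ n ih => rw [Function.iterate_succ_apply', ih, d_zero hadd]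

theorem iter_tail (r : R) {m n : ℕ} (hm : d^[m] r = 0) (hmn : m ≤ n) : d^[n] r = 0 := by
  have : n = (n - m) + m := by omega
  rw [this, Function.iterate_add_apply, hm, iter_d_zero hadd]

theorem find_bnd (r : R) {n : ℕ} (hn : Nat.find (hln r) ≤ n) : d^[n] r = 0 :=
  iter_tail hadd r (Nat.find_spec (hln r)) hn

theorem expD_eq (c : K) (r : R) {m : ℕ} (h : ∀ n, m ≤ n → d^[n] r = 0) :
    expD d hln c r = ∑ n ∈ range m, ((n.factorial : K)⁻¹ * c ^ n) • d^[n] r :=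
  sum_range_stable _ (fun n hn => by rw [find_bnd hadd hln r hn, smul_zero])
    (fun n hn => by rw [h n hn, smul_zero])

theorem d_sum {ι : Type*} (s : Finset ι) (f : ι → R) :
    d (∑ i ∈ s, f i) = ∑ i ∈ s, d (f i) := by
  classical
  induction s using Finset.induction with
  | empty => simpa using d_zero hadd
  | insert _ _ hx ih => rw [Finset.sum_insert hx, hadd, ih, Finset.sum_insert hx]

theorem d_nsmul (n : ℕ) (x : R) : d (n • x) = n • d x := by
  induction n with
  | zero => simpa using d_zero hadd
  | succ n ih => rw [succ_nsmul, hadd, ih, succ_nsmul]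

theorem iter_d_add (n : ℕ) (x y : R) : d^[n] (x + y) = d^[n] x + d^[n] y := by
  induction n generalizing x y with
  | zero => rfl
  | succ n ih => rw [Function.iterate_succ_apply, hadd, ih,
      Function.iterate_succ_apply, Function.iterate_succ_apply]

include hleib in
theorem iter_leibniz (n : ℕ) (x y : R) :
    d^[n] (x * y) = ∑ k ∈ range (n + 1), n.choose k • (d^[k] x * d^[n - k] y) := by
  induction n generalizing x y with
  | zero => simp
  | succ n ih =>
    rw [Function.iterate_succ_apply', ih, d_sum hadd]
    have hterm : ∀ k ∈ range (n + 1),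
        d (n.choose k • (d^[k] x * d^[n - k] y)) =
          n.choose k • (d^[k+1] x * d^[n - k] y) +
            n.choose k • (d^[k] x * d^[n - k + 1] y) := by
      intro k hk
      rw [d_nsmul hadd, hleib, smul_add, ← Function.iterate_succ_apply' d k x,
        ← Function.iterate_succ_apply' d (n-k) y]
    rw [Finset.sum_congr rfl hterm, Finset.sum_add_distrib]
    have hT : ∑ k ∈ range (n + 1 + 1), (n + 1).choose k • (d^[k] x * d^[n + 1 - k] y)
        = (∑ k ∈ range (n + 1), n.choose k • (d^[k+1] x * d^[n - k] y))
          + ((∑ k ∈ range (n + 1), n.choose (k+1) • (d^[k+1] x * d^[n - k] y))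
          + x * d^[n+1] y) := by
      rw [Finset.sum_range_succ']
      have : ∀ k ∈ range (n + 1), (n + 1).choose (k+1) • (d^[k+1] x * d^[n + 1 - (k+1)] y)
          = n.choose k • (d^[k+1] x * d^[n - k] y)
            + n.choose (k+1) • (d^[k+1] x * d^[n - k] y) := by
        intro k hk
        rw [Nat.choose_succ_succ, Nat.succ_sub_succ, add_smul]
      rw [Finset.sum_congr rfl this, Finset.sum_add_distrib]
      simp [add_assoc]
    have hS2 : ∑ k ∈ range (n + 1), n.choose k • (d^[k] x * d^[n - k + 1] y)
        = (∑ k ∈ range (n + 1), n.choose (k+1) • (d^[k+1] x * d^[n - k] y))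
          + x * d^[n+1] y := by
      rw [Finset.sum_range_succ', Finset.sum_range_succ, Nat.choose_succ_self, zero_smul,
        add_zero]
      have : ∀ k ∈ range n, n.choose (k+1) • (d^[k+1] x * d^[n - (k+1) + 1] y)
          = n.choose (k+1) • (d^[k+1] x * d^[n - k] y) := by
        intro k hk
        simp only [mem_range] at hk
        have h9 : n - (k+1) + 1 = n - k := by omega
        rw [h9]
      rw [Finset.sum_congr rfl this]
      simp
    rw [hT, hS2]

end ExpD

section More

variable {K R : Type*} [Field K] [CharZero K] [Ring R] [Algebra K R]
  {d : R → R}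
  (hadd : ∀ x y, d (x + y) = d x + d y)
  (hsmul : ∀ (c : K) (x : R), d (c • x) = c • d x)
  (hleib : ∀ x y, d (x * y) = d x * y + x * d y)
  (hln : ∀ r : R, ∃ n, d^[n] r = 0)

theorem key0 {n k : ℕ} (hkn : k ≤ n) :
    ((n.factorial : K))⁻¹ * (n.choose k : K) =
      (k.factorial : K)⁻¹ * ((n - k).factorial : K)⁻¹ := by
  have h := Nat.choose_mul_factorial_mul_factorial hkn
  have h2 : (n.choose k : K) * (k.factorial : K) * ((n - k).factorial : K) = (n.factorial : K) := by
    exact_mod_cast congrArg (Nat.cast : ℕ → K) h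
  have hk0 : (k.factorial : K) ≠ 0 := Nat.cast_ne_zero.2 (Nat.factorial_ne_zero _)
  have hnk0 : ((n - k).factorial : K) ≠ 0 := Nat.cast_ne_zero.2 (Nat.factorial_ne_zero _)
  have hn0 : (n.factorial : K) ≠ 0 := Nat.cast_ne_zero.2 (Nat.factorial_ne_zero _)
  field_simp
  linear_combination h2

include hadd in
theorem expD_add (c : K) (x y : R) :
    expD d hln c (x + y) = expD d hln c x + expD d hln c y := by
  set m := max (Nat.find (hln x)) (Nat.find (hln y)) with hm
  have hx : ∀ n, m ≤ n → d^[n] x = 0 :=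
    fun n hn => find_bnd hadd hln x (le_trans (le_max_left _ _) hn)
  have hy : ∀ n, m ≤ n → d^[n] y = 0 :=
    fun n hn => find_bnd hadd hln y (le_trans (le_max_right _ _) hn)
  have hxy : ∀ n, m ≤ n → d^[n] (x + y) = 0 := fun n hn => by
    rw [iter_d_add hadd, hx n hn, hy n hn, add_zero]
  rw [expD_eq hadd hln c _ hxy, expD_eq hadd hln c x hx, expD_eq hadd hln c y hy,
    ← Finset.sum_add_distrib]
  exact Finset.sum_congr rfl fun n _ => by rw [iter_d_add hadd, smul_add]

include hadd in
theorem expD_zero (c : K) : expD d hln c (0 : R) = 0 := by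
  rw [expD_eq hadd hln c (0:R) (m := 0) (fun n _ => iter_d_zero hadd n)]
  simp

include hadd hsmul in
theorem iter_d_smul (n : ℕ) (a : K) (x : R) : d^[n] (a • x) = a • d^[n] x := by
  induction n generalizing x with
  | zero => rfl
  | succ n ih => rw [Function.iterate_succ_apply, hsmul, ih,
      Function.iterate_succ_apply]

include hadd hsmul in
theorem expD_smul (c a : K) (x : R) : expD d hln c (a • x) = a • expD d hln c x := by
  set m := Nat.find (hln x) with hm
  have hx : ∀ n, m ≤ n → d^[n] x = 0 := fun n hn => find_bnd hadd hln x hn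
  have hax : ∀ n, m ≤ n → d^[n] (a • x) = 0 := fun n hn => by
    rw [iter_d_smul hadd hsmul, hx n hn, smul_zero]
  rw [expD_eq hadd hln c _ hax, expD_eq hadd hln c x hx, Finset.smul_sum]
  exact Finset.sum_congr rfl fun n _ => by
    rw [iter_d_smul hadd hsmul, smul_comm]

include hadd hleib in
theorem d_one : d (1 : R) = 0 := by
  have := hleib 1 1
  simp only [mul_one, one_mul] at this
  have h2 := congrArg (fun z => z - d 1) this
  simpa using h2.symm

include hadd hleib in
theorem expD_one (c : K) : expD d hln c (1 : R) = 1 := by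
  have h1 : ∀ n, 1 ≤ n → d^[n] (1 : R) = 0 :=
    fun n hn => iter_tail hadd 1 (by simpa using d_one hadd hleib) hn
  rw [expD_eq hadd hln c 1 h1]
  simp

include hadd hleib in
theorem expD_mul (c : K) (x y : R) :
    expD d hln c (x * y) = expD d hln c x * expD d hln c y := by
  set a := Nat.find (hln x) with ha
  set b := Nat.find (hln y) with hb
  have hx : ∀ n, a ≤ n → d^[n] x = 0 := fun n hn => find_bnd hadd hln x hn
  have hy : ∀ n, b ≤ n → d^[n] y = 0 := fun n hn => find_bnd hadd hln y hn
  have hxy : ∀ n, a + b ≤ n → d^[n] (x * y) = 0 := by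
    intro n hn
    rw [iter_leibniz hadd hleib]
    apply Finset.sum_eq_zero
    intro k hk
    simp only [mem_range] at hk
    rcases le_or_gt a k with h | h
    · rw [hx k h, zero_mul, smul_zero]
    · rw [hy (n - k) (by omega), mul_zero, smul_zero]
  rw [expD_eq hadd hln c (x * y) hxy]
  have hconv : ∀ n ∈ range (a + b), ((n.factorial : K)⁻¹ * c ^ n) • d^[n] (x * y)
      = ∑ k ∈ range (n + 1),
          ((((k).factorial : K)⁻¹ * c ^ k) * (((n - k).factorial : K)⁻¹ * c ^ (n - k))) •
            (d^[k] x * d^[n - k] y) := by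
    intro n _
    rw [iter_leibniz hadd hleib, Finset.smul_sum]
    apply Finset.sum_congr rfl
    intro k hk
    simp only [mem_range] at hk
    rw [← Nat.cast_smul_eq_nsmul K, smul_smul]
    congr 1
    have hck : c ^ n = c ^ k * c ^ (n - k) := by
      rw [← pow_add]; congr 1; omega
    calc (n.factorial : K)⁻¹ * c ^ n * (n.choose k : K)
        = ((n.factorial : K)⁻¹ * (n.choose k : K)) * c ^ n := by ring
      _ = ((k.factorial : K)⁻¹ * ((n - k).factorial : K)⁻¹) * (c ^ k * c ^ (n - k)) := by
          rw [key0 (by omega : k ≤ n), ← hck]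
      _ = _ := by ring
  have hd := diagSum a b (fun i j =>
      ((((i).factorial : K)⁻¹ * c ^ i) * (((j).factorial : K)⁻¹ * c ^ j)) •
        (d^[i] x * d^[j] y))
    (fun i j h => by
      rcases h with h | h
      · rw [hx i h, zero_mul, smul_zero]
      · rw [hy j h, mul_zero, smul_zero])
  rw [Finset.sum_congr rfl hconv, hd]
  rw [show expD d hln c x = ∑ n ∈ range a, ((n.factorial : K)⁻¹ * c ^ n) • d^[n] x from rfl,
    show expD d hln c y = ∑ n ∈ range b, ((n.factorial : K)⁻¹ * c ^ n) • d^[n] y from rfl,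
    Finset.sum_mul_sum]
  exact Finset.sum_congr rfl fun i _ => Finset.sum_congr rfl fun j _ =>
    (smul_mul_smul_comm _ _ _ _).symm

include hadd hsmul in
theorem expD_comp (c c' : K) (r : R) :
    expD d hln c (expD d hln c' r) = expD d hln (c + c') r := by
  set m := Nat.find (hln r) with hm
  have hr : ∀ n, m ≤ n → d^[n] r = 0 := fun n hn => find_bnd hadd hln r hn
  -- expand inner sum
  have hsum : ∀ (s : Finset ℕ) (f : ℕ → R),
      expD d hln c (∑ i ∈ s, f i) = ∑ i ∈ s, expD d hln c (f i) := by
    classical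
    intro s f
    induction s using Finset.induction with
    | empty => simpa using expD_zero hadd hln c
    | insert _ _ hx ih =>
      rw [Finset.sum_insert hx, expD_add hadd hln, ih, Finset.sum_insert hx]
  have hiter : ∀ n : ℕ, expD d hln c (d^[n] r)
      = ∑ k ∈ range m, ((k.factorial : K)⁻¹ * c ^ k) • d^[k + n] r := by
    intro n
    rw [expD_eq hadd hln c (d^[n] r) (m := m)
      (fun j hj => by
        rw [← Function.iterate_add_apply]
        exact hr (j + n) (by omega))]
    exact Finset.sum_congr rfl fun k _ => by rw [← Function.iterate_add_apply]
  rw [show expD d hln c' r = ∑ n ∈ range m, ((n.factorial : K)⁻¹ * c' ^ n) • d^[n] r from rfl,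
    hsum]
  have hstep : ∀ n ∈ range m,
      expD d hln c (((n.factorial : K)⁻¹ * c' ^ n) • d^[n] r)
        = ∑ k ∈ range m, (((k.factorial : K)⁻¹ * c ^ k) * ((n.factorial : K)⁻¹ * c' ^ n)) •
            d^[k + n] r := by
    intro n _
    rw [expD_smul hadd hsmul hln, hiter, Finset.smul_sum]
    exact Finset.sum_congr rfl fun k _ => by rw [smul_smul, mul_comm]
  rw [Finset.sum_congr rfl hstep, Finset.sum_comm]
  -- now LHS = ∑ i ∈ range m, ∑ j ∈ range m, t i j
  rw [expD_eq hadd hln (c + c') r (m := m + m)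
    (fun n hn => hr n (by omega))]
  have hd := diagSum m m (fun i j =>
      ((((i).factorial : K)⁻¹ * c ^ i) * (((j).factorial : K)⁻¹ * c' ^ j)) • d^[i + j] r)
    (fun i j h => by
      rw [show d^[i + j] r = 0 from hr (i + j) (by omega), smul_zero])
  rw [← hd]
  apply Finset.sum_congr rfl
  intro n _
  rw [add_pow, Finset.mul_sum, Finset.sum_smul]
  apply Finset.sum_congr rfl
  intro k hk
  simp only [mem_range] at hk
  rw [show k + (n - k) = n by omega]
  congr 1
  linear_combination (c ^ k * c' ^ (n - k)) * ((key0 (K := K) (show k ≤ n by omega)).symm)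

theorem expD_zero_self (r : R) : expD d hln (0 : K) r = r := by
  unfold expD
  rcases Nat.eq_zero_or_pos (Nat.find (hln r)) with h | h
  · have h0 := Nat.find_spec (hln r)
    rw [h] at h0 ⊢
    simp only [Function.iterate_zero, id_eq] at h0
    simpa using h0.symm
  · rw [Finset.sum_eq_single 0]
    · simp
    · intro n _ hn
      rw [zero_pow hn, mul_zero, zero_smul]
    · intro h0
      exact absurd (Finset.mem_range.2 h) h0

/-- exp of the derivation as a ring homomorphism. -/
noncomputable def expHom (hadd : ∀ x y, d (x + y) = d x + d y)
    (hsmul : ∀ (c : K) (x : R), d (c • x) = c • d x)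
    (hleib : ∀ x y, d (x * y) = d x * y + x * d y)
    (hln : ∀ r : R, ∃ n, d^[n] r = 0) (c : K) : R →+* R where
  toFun := expD d hln c
  map_one' := expD_one hadd hleib hln c
  map_mul' := expD_mul hadd hleib hln c
  map_zero' := expD_zero hadd hln c
  map_add' := expD_add hadd hln c

include hadd hsmul hleib in
theorem expHom_surj (c : K) : Function.Surjective (expHom hadd hsmul hleib hln c) := by
  intro r
  refine ⟨expD d hln (-c) r, ?_⟩
  show expD d hln c (expD d hln (-c) r) = r
  rw [expD_comp hadd hsmul hln, add_neg_cancel, expD_zero_self]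

include hadd hsmul hleib in
theorem expD_mem_jacobson (c : K) {v : R} (hv : v ∈ (⊥ : Ideal R).jacobson) :
    expD d hln c v ∈ (⊥ : Ideal R).jacobson := by
  unfold Ideal.jacobson at hv ⊢
  rw [Submodule.mem_sInf]
  intro m hm
  obtain ⟨-, hmax⟩ := hm
  haveI := hmax
  have hcm : (Ideal.comap (expHom hadd hsmul hleib hln c) m).IsMaximal :=
    Ideal.comap_isMaximal_of_surjective _ (expHom_surj hadd hsmul hleib hln c)
  have hvm : v ∈ Ideal.comap (expHom hadd hsmul hleib hln c) m :=
    Submodule.mem_sInf.1 hv _ ⟨bot_le, hcm⟩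
  exact hvm

end More

/-- The Jacobson radical of an algebra `R` over a field of characteristic zero is stable
under every locally nilpotent derivation of `R`. -/
theorem stmt2 {K R : Type*} [Field K] [CharZero K] [Ring R] [Algebra K R]
    (d : R → R)
    (hadd : ∀ x y, d (x + y) = d x + d y)
    (hsmul : ∀ (c : K) (x : R), d (c • x) = c • d x)
    (hleib : ∀ x y, d (x * y) = d x * y + x * d y)
    (hln : ∀ r : R, ∃ n, d^[n] r = 0) :
    ∀ v ∈ (⊥ : Ideal R).jacobson, d v ∈ (⊥ : Ideal R).jacobson := by
  intro v hv
  classical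
  set m := Nat.find (hln v) + 2 with hmdef
  have hvb : ∀ n, m ≤ n → d^[n] v = 0 := fun n hn => find_bnd hadd hln v (by omega)
  set w : ℕ → R := fun n => ((n.factorial : K)⁻¹) • d^[n] v with hw
  have hu : ∀ c : K, (∑ j : Fin m, c ^ (j : ℕ) • w j) ∈ (⊥ : Ideal R).jacobson := by
    intro c
    have h1 : expD d hln c v = ∑ n ∈ Finset.range m, c ^ n • w n := by
      rw [expD_eq hadd hln c v hvb]
      apply Finset.sum_congr rfl
      intro n _
      rw [hw]
      simp only
      rw [smul_smul, mul_comm]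
    have h2 := expD_mem_jacobson hadd hsmul hleib hln c hv
    rw [h1] at h2
    rwa [← Fin.sum_univ_eq_sum_range (fun n => c ^ n • w n) m] at h2
  set cf : Fin m → K := fun i => ((i : ℕ) : K) with hcf
  have hinj : Function.Injective cf := by
    intro i j hij
    have h5 : ((i : ℕ) : K) = ((j : ℕ) : K) := hij
    exact Fin.ext (Nat.cast_injective h5)
  have hdet : (Matrix.vandermonde cf).det ≠ 0 := Matrix.det_vandermonde_ne_zero_iff.2 hinj
  have hVinv := Matrix.nonsing_inv_mul (Matrix.vandermonde cf) (isUnit_iff_ne_zero.2 hdet)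
  have hwJ : ∀ k : Fin m, w (k : ℕ) ∈ (⊥ : Ideal R).jacobson := by
    intro k
    have h3 : w (k : ℕ)
        = ∑ j : Fin m, ((Matrix.vandermonde cf)⁻¹ * Matrix.vandermonde cf) k j • w (j : ℕ) := by
      rw [hVinv]
      simp [Matrix.one_apply]
    rw [h3]
    have h4 : ∀ j : Fin m, ((Matrix.vandermonde cf)⁻¹ * Matrix.vandermonde cf) k j • w (j : ℕ)
        = ∑ i : Fin m, (Matrix.vandermonde cf)⁻¹ k i • (cf i ^ (j : ℕ) • w (j : ℕ)) := by
      intro j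
      rw [Matrix.mul_apply, Finset.sum_smul]
      exact Finset.sum_congr rfl fun i _ => by
        rw [Matrix.vandermonde_apply, mul_smul]
    rw [Finset.sum_congr rfl (fun j _ => h4 j), Finset.sum_comm]
    apply Submodule.sum_mem
    intro i _
    rw [← Finset.smul_sum, Algebra.smul_def]
    exact Ideal.mul_mem_left _ _ (hu (cf i))
  have hfin := hwJ ⟨1, by omega⟩
  have hw1 : w 1 = d v := by
    rw [hw]
    simp
  rwa [show ((⟨1, by omega⟩ : Fin m) : ℕ) = 1 from rfl, hw1] at hfin
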